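/- If T(z) = Σ_{n≥1} n^{n-1} z^n / n! satisfies T(z) = z·exp(T(z)) in a neighborhood of the origin, then T(1/e) = 1. -/

import Mathlib

open Real Filter

noncomputable def treeC : ℕ → ℝ
  | 0 => 0
  | (n+1) => (n + 1 : ℝ) ^ n / (Nat.factorial (n + 1))

lemma treeC_nonneg (n : ℕ) : 0 ≤ treeC n := by
  cases n with
  | zero => simp [treeC]
  | succ n => exact div_nonneg (by positivity) (by positivity)

lemma treeC_bound (n : ℕ) : treeC n * ((Real.exp 1)⁻¹ : ℝ) ^ n ≤ 1 := by
  cases n with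
  | zero => simp [treeC]
  | succ n =>
    have h1 : ((n+1 : ℝ)) ^ (n+1) / (Nat.factorial (n+1)) ≤ Real.exp (n+1) := by
      rw [div_le_iff₀ (by positivity)]
      have := Real.pow_div_factorial_le_exp (x := (n+1 : ℝ)) (by positivity) (n+1)
      rw [div_le_iff₀ (by positivity)] at this
      exact this
    have h2 : treeC (n+1) ≤ Real.exp (n+1) := by
      have hle : ((n+1 : ℝ)) ^ n ≤ ((n+1 : ℝ)) ^ (n+1) :=
        pow_le_pow_right₀ (by norm_num) (Nat.le_succ n)
      calc treeC (n+1) = (n + 1 : ℝ) ^ n / (Nat.factorial (n+1)) := rfl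
        _ ≤ ((n+1 : ℝ)) ^ (n+1) / (Nat.factorial (n+1)) := by
            apply div_le_div_of_nonneg_right hle (by positivity) |>.trans_eq rfl
        _ ≤ Real.exp (n+1) := h1
    have h3 : Real.exp ((n:ℝ)+1) * ((Real.exp 1)⁻¹) ^ (n+1) = 1 := by
      rw [← Real.exp_neg, ← Real.exp_nat_mul, ← Real.exp_add,
        show (n:ℝ) + 1 + ((n:ℕ)+1 : ℕ) * (-1:ℝ) = 0 by push_cast; ring, Real.exp_zero]
    calc treeC (n+1) * ((Real.exp 1)⁻¹ : ℝ) ^ (n+1)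
        ≤ Real.exp ((n:ℝ)+1) * ((Real.exp 1)⁻¹) ^ (n+1) := by
          apply mul_le_mul_of_nonneg_right _ (by positivity)
          exact_mod_cast h2
      _ = 1 := h3

noncomputable def treeP : FormalMultilinearSeries ℝ ℝ ℝ :=
  FormalMultilinearSeries.ofScalars ℝ treeC

lemma treeP_radius : (Real.toNNReal (Real.exp 1)⁻¹ : ENNReal) ≤ treeP.radius := by
  apply FormalMultilinearSeries.le_radius_of_bound _ 1
  intro n
  rw [treeP, FormalMultilinearSeries.ofScalars_norm]
  rw [Real.norm_eq_abs, abs_of_nonneg (treeC_nonneg n),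
    Real.coe_toNNReal _ (by positivity)]
  exact treeC_bound n

lemma treeP_radius_pos : 0 < treeP.radius :=
  lt_of_lt_of_le (by simp [Real.toNNReal_pos]; positivity) treeP_radius

lemma tsum_shift {f : ℕ → ℝ} (h0 : f 0 = 0) : ∑' n, f n = ∑' n, f (n+1) := by
  refine tsum_eq_tsum_of_ne_zero_bij (fun x => x.1 + 1) ?_ ?_ ?_
  · intro x y hxy
    exact Subtype.ext (by simpa using hxy)
  · intro x hx
    rcases Nat.exists_eq_succ_of_ne_zero (show x ≠ 0 from fun h => hx (by simp [h, h0])) with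
      ⟨m, rfl⟩
    exact ⟨⟨m, by simpa using hx⟩, rfl⟩
  · intro x; rfl

lemma treeP_sum (T : ℝ → ℝ)
    (hT : ∀ z : ℝ, T z = ∑' n : ℕ, ((n + 1 : ℝ) ^ n / (Nat.factorial (n + 1))) * z ^ (n + 1)) :
    T = treeP.sum := by
  funext z
  rw [hT z, FormalMultilinearSeries.sum]
  have h1 : ∀ n : ℕ, (treeP n fun _ => z) = treeC n * z ^ n := by
    intro n
    rw [treeP, FormalMultilinearSeries.ofScalars_apply_eq, smul_eq_mul]
  rw [tsum_congr h1, tsum_shift (f := fun n => treeC n * z ^ n) (by simp [treeC])]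
  exact tsum_congr fun n => by rw [treeC]

lemma mem_ball_of_abs_lt {z : ℝ} (hz : |z| < (Real.exp 1)⁻¹) :
    z ∈ Metric.eball (0 : ℝ) treeP.radius := by
  rw [Metric.mem_eball, edist_zero_right]
  refine lt_of_lt_of_le ?_ treeP_radius
  refine ENNReal.coe_lt_coe.2 ?_
  rw [← NNReal.coe_lt_coe, coe_nnnorm, Real.norm_eq_abs,
    Real.coe_toNNReal _ (by positivity)]
  exact hz

lemma treeT_analyticOnNhd : AnalyticOnNhd ℝ treeP.sum (Metric.eball (0 : ℝ) treeP.radius) :=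
  (treeP.hasFPowerSeriesOnBall treeP_radius_pos).analyticOnNhd

lemma summable_inside {z : ℝ} (hz : |z| < (Real.exp 1)⁻¹) :
    Summable (fun n : ℕ => treeC (n+1) * z ^ (n+1)) := by
  have hs := ((treeP.hasFPowerSeriesOnBall treeP_radius_pos).hasSum
    (y := z) (by simpa using mem_ball_of_abs_lt hz)).summable
  have : Summable (fun n : ℕ => treeC n * z ^ n) := by
    refine hs.congr fun n => ?_
    rw [treeP, FormalMultilinearSeries.ofScalars_apply_eq, smul_eq_mul]
  exact (summable_nat_add_iff 1).2 this

lemma hasDerivAt_xexp (x : ℝ) :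
    HasDerivAt (fun t : ℝ => t * Real.exp (-t)) ((1 - x) * Real.exp (-x)) x := by
  have h1 : HasDerivAt (fun t : ℝ => Real.exp (-t)) (Real.exp (-x) * (-1)) x :=
    (Real.hasDerivAt_exp (-x)).comp x (hasDerivAt_neg x)
  have h2 : HasDerivAt (fun t : ℝ => t * Real.exp (-t))
      (1 * Real.exp (-x) + x * (Real.exp (-x) * (-1))) x := (hasDerivAt_id x).mul h1
  convert h2 using 1
  show (1 - x) * Real.exp (-x) = 1 * Real.exp (-x) + x * (Real.exp (-x) * (-1))
  ring

lemma strictMonoOn_xexp : StrictMonoOn (fun t : ℝ => t * Real.exp (-t)) (Set.Iic 1) := by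
  apply strictMonoOn_of_deriv_pos (convex_Iic 1)
  · exact (continuous_id.mul (Real.continuous_exp.comp continuous_neg)).continuousOn
  · intro x hx
    rw [interior_Iic] at hx
    rw [(hasDerivAt_xexp x).deriv]
    have : 0 < 1 - x := by simpa using hx
    positivity

lemma abs_xexp_lt {x : ℝ} (hx : x ∈ Set.Ioo (-(8:ℝ)⁻¹) 1) :
    |x * Real.exp (-x)| < (Real.exp 1)⁻¹ := by
  rcases le_or_gt 0 x with h0 | h0
  · rw [abs_of_nonneg (by positivity)]
    have := strictMonoOn_xexp (Set.mem_Iic.2 hx.2.le) (Set.mem_Iic.2 le_rfl) hx.2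
    simpa [Real.exp_neg] using this
  · rw [abs_of_neg (by nlinarith [Real.exp_pos (-x)]),
      show -(x * Real.exp (-x)) = (-x) * Real.exp (-x) by ring]
    have h1 : -x < 8⁻¹ := by have := hx.1; linarith
    have h2 : Real.exp (-x) < Real.exp 1 := Real.exp_lt_exp.2 (by linarith)
    have h9 : Real.exp 1 < 2.7182818286 := Real.exp_one_lt_d9
    have h3 : Real.exp 1 * Real.exp 1 < 8 := by
      have := mul_lt_mul'' h9 h9 (Real.exp_pos 1).le (Real.exp_pos 1).le
      nlinarith
    have hp : (0:ℝ) < Real.exp 1 := Real.exp_pos 1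
    have hlt : (-x) * Real.exp (-x) < 8⁻¹ * Real.exp 1 :=
      mul_lt_mul'' h1 h2 (by linarith) (Real.exp_pos _).le
    refine hlt.trans_le ?_
    rw [inv_eq_one_div, inv_eq_one_div, div_mul_eq_mul_div, div_le_div_iff₀ (by norm_num) hp]
    nlinarith [Real.exp_one_lt_d9, Real.exp_pos 1]

lemma key (T : ℝ → ℝ) (hTs : T = treeP.sum)
    (heq : ∃ ε > 0, ∀ z : ℝ, |z| < ε → T z = z * Real.exp (T z)) :
    ∀ x ∈ Set.Ioo (-(8:ℝ)⁻¹) 1, T (x * Real.exp (-x)) = x := by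
  obtain ⟨ε, εpos, hε⟩ := heq
  have hA : AnalyticOnNhd ℝ T (Metric.eball 0 treeP.radius) := hTs ▸ treeT_analyticOnNhd
  have φcont : Continuous (fun t : ℝ => t * Real.exp (-t)) :=
    continuous_id.mul (Real.continuous_exp.comp continuous_neg)
  have hφ : ∀ x : ℝ, AnalyticAt ℝ (fun t : ℝ => t * Real.exp (-t)) x := by
    intro x
    have h1 : AnalyticAt ℝ (Real.exp ∘ fun t : ℝ => -t) x :=
      analyticAt_rexp.comp (analyticAt_id.neg)
    exact analyticAt_id.mul h1
  have hmem0 : (0:ℝ) ∈ Metric.eball (0:ℝ) treeP.radius :=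
    mem_ball_of_abs_lt (by simp; positivity)
  have hT0 : T 0 = 0 := by
    rw [hTs, FormalMultilinearSeries.sum]
    have : ∀ n : ℕ, (treeP n fun _ => (0:ℝ)) = 0 := by
      intro n
      rw [treeP, FormalMultilinearSeries.ofScalars_apply_eq, smul_eq_mul]
      cases n with
      | zero => simp [treeC]
      | succ n => simp
    rw [tsum_congr this, tsum_zero]
  have hcomp : AnalyticOnNhd ℝ (fun x => T (x * Real.exp (-x)) - x)
      (Set.Ioo (-(8:ℝ)⁻¹) 1) := by
    intro x hx
    have h1 : AnalyticAt ℝ (T ∘ fun t : ℝ => t * Real.exp (-t)) x :=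
      AnalyticAt.comp (f := fun t : ℝ => t * Real.exp (-t)) (g := T)
        (hA _ (mem_ball_of_abs_lt (abs_xexp_lt hx))) (hφ x)
    exact h1.sub analyticAt_id
  have φtend : Filter.Tendsto (fun t : ℝ => t * Real.exp (-t)) (nhds 0) (nhds 0) := by
    have := φcont.tendsto 0
    simpa using this
  have Ttend : Filter.Tendsto (fun x : ℝ => T (x * Real.exp (-x))) (nhds 0) (nhds 0) := by
    have hTc : ContinuousAt T 0 := (hA 0 hmem0).continuousAt
    have := hTc.tendsto
    rw [hT0] at this
    exact this.comp φtend
  have habs : ∀ (δ : ℝ), 0 < δ → ∀ᶠ y in nhds (0:ℝ), |y| < δ := by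
    intro δ hδ
    filter_upwards [Metric.ball_mem_nhds (0:ℝ) hδ] with y hy
    simpa [Real.dist_eq] using hy
  have e1 : ∀ᶠ x in nhds (0:ℝ), |x * Real.exp (-x)| < ε := φtend.eventually (habs ε εpos)
  have e2 : ∀ᶠ x in nhds (0:ℝ), |T (x * Real.exp (-x))| < 1 :=
    Ttend.eventually (habs 1 one_pos)
  have e3 : ∀ᶠ x in nhds (0:ℝ), |x| < 1 := habs 1 one_pos
  have ekey : ∀ᶠ x in nhds (0:ℝ), T (x * Real.exp (-x)) = x := by
    filter_upwards [e1, e2, e3] with x h1 h2 h3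
    set w := x * Real.exp (-x) with hw
    have hfe := hε w h1
    have hval : T w * Real.exp (-(T w)) = x * Real.exp (-x) := by
      nth_rewrite 1 [hfe]
      rw [Real.exp_neg, mul_assoc, mul_inv_cancel₀ (Real.exp_ne_zero _), mul_one]
    exact strictMonoOn_xexp.injOn (Set.mem_Iic.2 (abs_lt.1 h2).2.le)
      (Set.mem_Iic.2 (abs_lt.1 h3).2.le) hval
  have hzero : (fun x => T (x * Real.exp (-x)) - x) =ᶠ[nhds (0:ℝ)] 0 := by
    filter_upwards [ekey] with x hx
    simp [hx]
  have := hcomp.eqOn_zero_of_preconnected_of_eventuallyEq_zero isPreconnected_Ioo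
    (by norm_num : (0:ℝ) ∈ Set.Ioo (-(8:ℝ)⁻¹) 1) hzero
  intro x hx
  have h := this hx
  simpa [sub_eq_zero] using h

/-- If `T(z) = Σ_{n ≥ 1} n^(n-1) z^n / n!` satisfies `T(z) = z·exp(T(z))` in a
neighbourhood of the origin, then `T(1/e) = 1`. The sum is indexed so that the
`n`-th summand (for `n : ℕ`) is the term for `n + 1`. -/
theorem tree_egf_at_inv_e
    (T : ℝ → ℝ)
    (hT : ∀ z : ℝ, T z = ∑' n : ℕ, ((n + 1 : ℝ) ^ n / (Nat.factorial (n + 1))) * z ^ (n + 1))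
    (heq : ∃ ε > 0, ∀ z : ℝ, |z| < ε → T z = z * Real.exp (T z)) :
    T (Real.exp 1)⁻¹ = 1 := by
  have hTs : T = treeP.sum := treeP_sum T hT
  have hkey := key T hTs heq
  set a : ℕ → ℝ := fun n => treeC (n+1) * ((Real.exp 1)⁻¹) ^ (n+1) with ha
  have ha_nonneg : ∀ n, 0 ≤ a n := fun n => mul_nonneg (treeC_nonneg _) (by positivity)
  have hTval : T (Real.exp 1)⁻¹ = ∑' n, a n := by
    rw [hT]
    exact tsum_congr fun n => by simp only [ha]; rw [treeC]
  have hmem : ∀ x ∈ Set.Ioo (0:ℝ) 1, |x * Real.exp (-x)| < (Real.exp 1)⁻¹ := by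
    intro x hx
    exact abs_xexp_lt ⟨by have := hx.1; norm_num; linarith, hx.2⟩
  have hone : (1:ℝ) * Real.exp (-1) = (Real.exp 1)⁻¹ := by rw [one_mul, Real.exp_neg]
  have hupper : ∀ N : ℕ, ∑ n ∈ Finset.range N, a n ≤ 1 := by
    intro N
    have cont : Continuous
        (fun x : ℝ => ∑ n ∈ Finset.range N, treeC (n+1) * (x * Real.exp (-x))^(n+1)) := by
      apply continuous_finset_sum
      intro i _
      exact continuous_const.mul
        ((continuous_id.mul (Real.continuous_exp.comp continuous_neg)).pow _)
    have tend : Filter.Tendsto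
        (fun x : ℝ => ∑ n ∈ Finset.range N, treeC (n+1) * (x * Real.exp (-x))^(n+1))
        (nhdsWithin 1 (Set.Iio 1)) (nhds (∑ n ∈ Finset.range N, a n)) := by
      have h1 := (cont.tendsto 1).mono_left (nhdsWithin_le_nhds (s := Set.Iio 1))
      convert h1 using 2
      exact (Finset.sum_congr rfl fun n _ => by rw [ha, hone]).symm
    have ev : ∀ᶠ x in nhdsWithin 1 (Set.Iio 1),
        ∑ n ∈ Finset.range N, treeC (n+1) * (x * Real.exp (-x))^(n+1) ≤ 1 := by
      filter_upwards [Ioo_mem_nhdsLT_of_mem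
        (show (1:ℝ) ∈ Set.Ioc 0 1 by norm_num)] with x hx
      have hTx : T (x * Real.exp (-x)) = ∑' n, treeC (n+1) * (x * Real.exp (-x))^(n+1) := by
        rw [hT]
        exact tsum_congr fun n => by rw [treeC]
      have hsum := Summable.sum_le_tsum (Finset.range N)
        (fun i _ => mul_nonneg (treeC_nonneg _)
          (pow_nonneg (mul_nonneg hx.1.le (Real.exp_pos _).le) _))
        (summable_inside (hmem x hx))
      have hk := hkey x ⟨by have := hx.1; norm_num; linarith, hx.2⟩
      calc ∑ n ∈ Finset.range N, treeC (n+1) * (x * Real.exp (-x))^(n+1)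
          ≤ ∑' n, treeC (n+1) * (x * Real.exp (-x))^(n+1) := hsum
        _ = T (x * Real.exp (-x)) := hTx.symm
        _ = x := hk
        _ ≤ 1 := hx.2.le
    exact le_of_tendsto tend ev
  have hsummable : Summable a := summable_of_sum_range_le ha_nonneg hupper
  have hle : ∑' n, a n ≤ 1 := Real.tsum_le_of_sum_range_le ha_nonneg hupper
  have hge : (1:ℝ) ≤ ∑' n, a n := by
    have step : ∀ x ∈ Set.Ioo (0:ℝ) 1, x ≤ ∑' n, a n := by
      intro x hx
      have hk := hkey x ⟨by have := hx.1; norm_num; linarith, hx.2⟩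
      have hTx : T (x * Real.exp (-x)) = ∑' n, treeC (n+1) * (x * Real.exp (-x))^(n+1) := by
        rw [hT]
        exact tsum_congr fun n => by rw [treeC]
      have hcmp : ∑' n, treeC (n+1) * (x * Real.exp (-x))^(n+1) ≤ ∑' n, a n := by
        refine Summable.tsum_le_tsum ?_ (summable_inside (hmem x hx)) hsummable
        intro n
        refine mul_le_mul_of_nonneg_left ?_ (treeC_nonneg _)
        exact pow_le_pow_left₀ (mul_nonneg hx.1.le (Real.exp_pos _).le)
          ((le_abs_self _).trans (hmem x hx).le) _
      calc x = T (x * Real.exp (-x)) := hk.symm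
        _ = ∑' n, treeC (n+1) * (x * Real.exp (-x))^(n+1) := hTx
        _ ≤ ∑' n, a n := hcmp
    have tendid : Filter.Tendsto (fun x : ℝ => x) (nhdsWithin 1 (Set.Iio 1)) (nhds 1) :=
      Filter.tendsto_id.mono_left nhdsWithin_le_nhds
    refine le_of_tendsto tendid ?_
    filter_upwards [Ioo_mem_nhdsLT_of_mem
      (show (1:ℝ) ∈ Set.Ioc 0 1 by norm_num)] with x hx using step x hx
  rw [hTval]
  exact le_antisymm hle hge
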